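/- Let k > 0, t > 0, m > 0 and T₀ > 0, and set T = T₀ + 2kt/m. Then for every p ∈ ℝ³, ∫_{ℝ³} (4πkt)^{−3/2}·exp(−‖p−q‖²/(4kt)) · (2πmT₀)^{−3/2}·exp(−‖q‖²/(2mT₀)) dq = (2πmT)^{−3/2}·exp(−‖p‖²/(2mT)). In particular, an initially thermal (Maxwell–Boltzmann) momentum distribution evolved by the heat kernel remains thermal, with temperature increasing at the rate dT/dt = 2k/m. -/

import Mathlib

open Real MeasureTheory

lemma gauss1d (a b : ℝ) (ha : 0 < a) (hb : 0 < b) (x : ℝ) :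
    ∫ y : ℝ, Real.exp (-(a * (x - y) ^ 2) - b * y ^ 2)
      = Real.sqrt (π / (a + b)) * Real.exp (-(a * b / (a + b)) * x ^ 2) := by
  have hab : 0 < a + b := by linarith
  have key : ∀ y : ℝ, -(a * (x - y) ^ 2) - b * y ^ 2
      = -((a + b) * (y - a * x / (a + b)) ^ 2) + -(a * b / (a + b)) * x ^ 2 := by
    intro y; field_simp; ring
  simp_rw [key, Real.exp_add, integral_mul_const]
  rw [show (∫ y : ℝ, Real.exp (-((a + b) * (y - a * x / (a + b)) ^ 2)))
      = ∫ y : ℝ, Real.exp (-((a + b) * y ^ 2)) from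
    integral_sub_right_eq_self (fun y => Real.exp (-((a + b) * y ^ 2))) (a * x / (a + b))]
  simp_rw [← neg_mul]
  rw [integral_gaussian]

lemma gauss3d (a b : ℝ) (ha : 0 < a) (hb : 0 < b) (w : Fin 3 → ℝ) :
    ∫ q : Fin 3 → ℝ, Real.exp (∑ i, (-(a * (w i - q i) ^ 2) - b * (q i) ^ 2))
      = (π / (a + b)) ^ ((3 : ℝ) / 2) * Real.exp (-(a * b / (a + b)) * ∑ i, (w i) ^ 2) := by
  have hab : 0 < a + b := by linarith
  simp_rw [Real.exp_sum]
  rw [volume_pi, integral_fintype_prod_eq_prod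
    (f := fun i y => Real.exp (-(a * (w i - y) ^ 2) - b * y ^ 2))]
  simp_rw [gauss1d a b ha hb]
  rw [Finset.prod_mul_distrib, Finset.prod_const, ← Real.exp_sum]
  congr 1
  · rw [Finset.card_univ, Fintype.card_fin, ← Real.rpow_natCast (√(π / (a + b))) 3,
      Real.rpow_def_of_pos (Real.sqrt_pos.2 (by positivity)),
      Real.log_sqrt (by positivity : (0:ℝ) ≤ π / (a + b)),
      Real.rpow_def_of_pos (by positivity : (0:ℝ) < π / (a + b))]
    norm_num; ring_nf
  · rw [← Finset.mul_sum]

theorem heat_kernel_maxwellBoltzmann (k t m T₀ : ℝ) (hk : 0 < k) (ht : 0 < t)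
    (hm : 0 < m) (hT₀ : 0 < T₀) (p : EuclideanSpace ℝ (Fin 3)) :
    ∫ q : EuclideanSpace ℝ (Fin 3),
        (4 * π * k * t) ^ (-(3 : ℝ) / 2) * Real.exp (-‖p - q‖ ^ 2 / (4 * k * t)) *
          ((2 * π * m * T₀) ^ (-(3 : ℝ) / 2) * Real.exp (-‖q‖ ^ 2 / (2 * m * T₀)))
      = (2 * π * m * (T₀ + 2 * k * t / m)) ^ (-(3 : ℝ) / 2) *
          Real.exp (-‖p‖ ^ 2 / (2 * m * (T₀ + 2 * k * t / m))) := by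
  have hπ := Real.pi_pos
  have hT : 0 < T₀ + 2 * k * t / m := by positivity
  set a : ℝ := (4 * k * t)⁻¹ with ha'
  set b : ℝ := (2 * m * T₀)⁻¹ with hb'
  have ha : 0 < a := by positivity
  have hb : 0 < b := by positivity
  have hab : 0 < a + b := by linarith
  have hnormsq : ∀ x : EuclideanSpace ℝ (Fin 3), ‖x‖ ^ 2 = ∑ i, (x i) ^ 2 := by
    intro x
    rw [EuclideanSpace.norm_eq, Real.sq_sqrt (by positivity)]
    simp [sq_abs]
  rw [← ((EuclideanSpace.volume_preserving_symm_measurableEquiv_toLp (Fin 3)).symm).integral_comp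
    (MeasurableEquiv.measurableEmbedding _)]
  have key : ∀ q : Fin 3 → ℝ,
      (4 * π * k * t) ^ (-(3 : ℝ) / 2) *
          Real.exp (-‖p - (MeasurableEquiv.toLp 2 (Fin 3 → ℝ)) q‖ ^ 2 / (4 * k * t)) *
        ((2 * π * m * T₀) ^ (-(3 : ℝ) / 2) *
          Real.exp (-‖(MeasurableEquiv.toLp 2 (Fin 3 → ℝ)) q‖ ^ 2 / (2 * m * T₀)))
      = ((4 * π * k * t) ^ (-(3 : ℝ) / 2) * (2 * π * m * T₀) ^ (-(3 : ℝ) / 2)) *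
          Real.exp (∑ i, (-(a * (p i - q i) ^ 2) - b * (q i) ^ 2)) := by
    intro q
    have hcoord : ∀ i, ((MeasurableEquiv.toLp 2 (Fin 3 → ℝ)) q) i = q i := by
      intro i
      rfl
    rw [hnormsq, hnormsq, mul_mul_mul_comm, ← Real.exp_add]
    congr 1
    simp only [PiLp.sub_apply, hcoord, Fin.sum_univ_three]
    rw [ha', hb']
    congr 1; ring
  simp only [Function.comp_def, MeasurableEquiv.symm_symm, key]
  rw [MeasureTheory.integral_const_mul, gauss3d a b ha hb (fun i => p i)]
  have hfrac : a * b / (a + b) = (2 * m * (T₀ + 2 * k * t / m))⁻¹ := by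
    rw [ha', hb']
    field_simp
    ring
  have hexp : -(a * b / (a + b)) * ∑ i, (p i) ^ 2 = -‖p‖ ^ 2 / (2 * m * (T₀ + 2 * k * t / m)) := by
    rw [hnormsq p, hfrac]; ring
  have hconst : (4 * π * k * t) ^ (-(3 : ℝ) / 2) * (2 * π * m * T₀) ^ (-(3 : ℝ) / 2) *
      (π / (a + b)) ^ ((3 : ℝ) / 2) = (2 * π * m * (T₀ + 2 * k * t / m)) ^ (-(3 : ℝ) / 2) := by
    rw [neg_div, Real.rpow_neg (by positivity), Real.rpow_neg (by positivity),
      Real.rpow_neg (by positivity), ← Real.inv_rpow (by positivity),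
      ← Real.inv_rpow (by positivity), ← Real.inv_rpow (by positivity),
      ← Real.mul_rpow (by positivity) (by positivity),
      ← Real.mul_rpow (by positivity) (by positivity)]
    congr 1
    rw [ha', hb']
    field_simp
    ring
  rw [← mul_assoc, hconst, hexp]
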